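/- For 0 < σ < 1 and fixed α ∈ (0,1), the minimal Type II error β(y) for the optimal symmetric-interval test between N(0,1) and N(y,σ²) is strictly decreasing in y > 0. Concretely, if the rejection region is [z - t, z + t] with z = y/(1-σ²) and t = t(y) determined by Φ(z+t) - Φ(z-t) = α, then ∂β/∂y < 0. -/

import Mathlib

open MeasureTheory ProbabilityTheory Real

/-- The standard normal CDF `Φ`. -/
noncomputable def stdPhi (t : ℝ) : ℝ := ((gaussianReal 0 1) (Set.Iic t)).toReal

/-- for `0 < σ < 1` and fixed `α ∈ (0,1)`, if for each `y > 0` the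
rejection region is `[z - t(y), z + t(y)]` with `z = y/(1-σ²)` and `t(y) > 0`
determined by `Φ(z+t) - Φ(z-t) = α`, then the resulting Type II error
`β(y) = 1 - [Φ(σy/(1-σ²) + t(y)/σ) - Φ(σy/(1-σ²) - t(y)/σ)]` is strictly
decreasing in `y > 0`, i.e. `∂β/∂y < 0`. -/


noncomputable def phiD (x : ℝ) : ℝ := gaussianPDFReal 0 1 x

lemma phiD_pos (x : ℝ) : 0 < phiD x := gaussianPDFReal_pos 0 1 x one_ne_zero

lemma continuous_phiD : Continuous phiD := by
  unfold phiD gaussianPDFReal; fun_prop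

lemma phiD_ratio (a b : ℝ) : phiD b = phiD a * Real.exp ((a^2 - b^2)/2) := by
  unfold phiD gaussianPDFReal
  push_cast
  rw [show (a^2 - b^2)/2 = (-(b-0)^2/(2*(1:ℝ))) - (-(a-0)^2/(2*1)) by ring, Real.exp_sub]
  field_simp

lemma stdPhi_eq_integral (t : ℝ) : stdPhi t = ∫ x in Set.Iic t, phiD x := by
  unfold stdPhi
  rw [gaussianReal_apply_eq_integral 0 one_ne_zero,
    ENNReal.toReal_ofReal (integral_nonneg fun x => gaussianPDFReal_nonneg 0 1 x)]
  rfl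

lemma stdPhi_sub (a b : ℝ) : stdPhi b - stdPhi a = ∫ x in a..b, phiD x := by
  have hint : Integrable phiD := integrable_gaussianPDFReal 0 1
  have h := intervalIntegral.integral_Iic_sub_Iic (μ := volume) (f := phiD) (a := a) (b := b)
    hint.integrableOn hint.integrableOn
  rw [stdPhi_eq_integral, stdPhi_eq_integral, ← h]

lemma hasStrictDerivAt_stdPhi (x : ℝ) : HasStrictDerivAt stdPhi (phiD x) x := by
  have h : stdPhi = fun t => (∫ u in (0:ℝ)..t, phiD u) + stdPhi 0 := by
    funext t; rw [← stdPhi_sub]; ring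
  rw [h]
  exact (continuous_phiD.integral_hasStrictDerivAt 0 x).add_const _

/-- strict monotonicity in the half-width. -/
lemma strictMono_psi (w : ℝ) : StrictMono (fun τ => stdPhi (w + τ) - stdPhi (w - τ)) := by
  apply strictMono_of_hasDerivAt_pos (f' := fun τ => phiD (w + τ) + phiD (w - τ))
  · intro τ
    have h1 : HasDerivAt (fun τ : ℝ => stdPhi (w + τ)) (phiD (w + τ) * 1) τ :=
      (hasStrictDerivAt_stdPhi (w + τ)).hasDerivAt.comp τ ((hasDerivAt_id τ).const_add w)
    have h2 : HasDerivAt (fun τ : ℝ => stdPhi (w - τ)) (phiD (w - τ) * (-1)) τ := by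
      refine (hasStrictDerivAt_stdPhi (w - τ)).hasDerivAt.comp τ ?_
      exact (hasDerivAt_id' τ).const_sub w
    have := h1.sub h2
    exact this.congr_deriv (by ring)
  · intro τ
    have h1 := phiD_pos (w + τ); have h2 := phiD_pos (w - τ); linarith

theorem main_deriv (σ : ℝ) (α : ℝ) (hσ0 : 0 < σ) (hσ1 : σ < 1) (t : ℝ → ℝ)
    (ht : ∀ y > 0, 0 < t y)
    (heq : ∀ y > 0,
      stdPhi (y / (1 - σ ^ 2) + t y) - stdPhi (y / (1 - σ ^ 2) - t y) = α)
    (y₀ : ℝ) (hy₀ : 0 < y₀) :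
    ∃ d > 0, HasDerivAt (fun y => stdPhi (σ * y / (1 - σ ^ 2) + t y / σ)
                      - stdPhi (σ * y / (1 - σ ^ 2) - t y / σ)) d y₀ := by
  set k : ℝ := 1 - σ ^ 2 with hk_def
  have hk : 0 < k := by nlinarith
  set z : ℝ := y₀ / k with hz_def
  have hz : 0 < z := div_pos hy₀ hk
  set τ : ℝ := t y₀ with hτ_def
  have hτ : 0 < τ := ht y₀ hy₀
  set u : ℝ := z + τ with hu_def
  set v : ℝ := z - τ with hv_def
  set E : ℝ := Real.exp (2 * z * τ) with hE_def
  have hE : 1 < E := by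
    have := Real.exp_lt_exp.2 (show (0:ℝ) < 2 * z * τ by positivity)
    rwa [Real.exp_zero] at this
  have hφv : phiD v = phiD u * E := by
    rw [phiD_ratio u v, hE_def]
    congr 1
    rw [hu_def, hv_def]; ring
  -- the function Ψ and its strict derivative
  set Ψ : ℝ × ℝ → ℝ := fun p => stdPhi (p.1 / k + p.2) - stdPhi (p.1 / k - p.2) with hΨ_def
  set L1 : ℝ × ℝ →L[ℝ] ℝ :=
    k⁻¹ • ContinuousLinearMap.fst ℝ ℝ ℝ + ContinuousLinearMap.snd ℝ ℝ ℝ with hL1_def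
  set L2 : ℝ × ℝ →L[ℝ] ℝ :=
    k⁻¹ • ContinuousLinearMap.fst ℝ ℝ ℝ - ContinuousLinearMap.snd ℝ ℝ ℝ with hL2_def
  have hL1app : ∀ p : ℝ × ℝ, L1 p = p.1 / k + p.2 := by
    intro p; simp [hL1_def, div_eq_inv_mul]
  have hL2app : ∀ p : ℝ × ℝ, L2 p = p.1 / k - p.2 := by
    intro p; simp [hL2_def, div_eq_inv_mul, sub_eq_add_neg]
  have hin1 : HasStrictFDerivAt (fun p : ℝ × ℝ => p.1 / k + p.2) L1 (y₀, τ) := by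
    have h : (fun p : ℝ × ℝ => p.1 / k + p.2) = ⇑L1 := by funext p; rw [hL1app]
    rw [h]; exact L1.hasStrictFDerivAt
  have hin2 : HasStrictFDerivAt (fun p : ℝ × ℝ => p.1 / k - p.2) L2 (y₀, τ) := by
    have h : (fun p : ℝ × ℝ => p.1 / k - p.2) = ⇑L2 := by funext p; rw [hL2app]
    rw [h]; exact L2.hasStrictFDerivAt
  have hΨd : HasStrictFDerivAt Ψ (phiD u • L1 - phiD v • L2) (y₀, τ) := by
    refine HasStrictFDerivAt.sub ?_ ?_
    · exact (hasStrictDerivAt_stdPhi u).comp_hasStrictFDerivAt_of_eq _ hin1 (by rw [hu_def, hz_def])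
    · exact (hasStrictDerivAt_stdPhi v).comp_hasStrictFDerivAt_of_eq _ hin2 (by rw [hv_def, hz_def])
  set F : ℝ × ℝ → ℝ × ℝ := fun p => (p.1, Ψ p) with hF_def
  set A : ℝ × ℝ →L[ℝ] ℝ × ℝ :=
    (ContinuousLinearMap.fst ℝ ℝ ℝ).prod (phiD u • L1 - phiD v • L2) with hA_def
  have hFd : HasStrictFDerivAt F A (y₀, τ) := HasStrictFDerivAt.prodMk hasStrictFDerivAt_fst hΨd
  have hAapp : ∀ p : ℝ × ℝ,
      A p = (p.1, (phiD u - phiD v) / k * p.1 + (phiD u + phiD v) * p.2) := by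
    intro p
    simp only [hA_def, ContinuousLinearMap.prod_apply, ContinuousLinearMap.sub_apply,
      ContinuousLinearMap.smul_apply, hL1app, hL2app]
    rw [Prod.mk.injEq]
    exact ⟨rfl, by simp only [smul_eq_mul]; ring⟩
  set aC : ℝ := (phiD u - phiD v) / k with haC_def
  set D : ℝ := phiD u + phiD v with hD_def
  have hDpos : 0 < D := by have := phiD_pos u; have := phiD_pos v; rw [hD_def]; linarith
  have hAapp' : ∀ p : ℝ × ℝ, A p = (p.1, aC * p.1 + D * p.2) := hAapp
  set Ainv : ℝ × ℝ →L[ℝ] ℝ × ℝ :=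
    (ContinuousLinearMap.fst ℝ ℝ ℝ).prod
      (D⁻¹ • (ContinuousLinearMap.snd ℝ ℝ ℝ - aC • ContinuousLinearMap.fst ℝ ℝ ℝ)) with hAinv_def
  have hAinvapp : ∀ p : ℝ × ℝ, Ainv p = (p.1, D⁻¹ * (p.2 - aC * p.1)) := by
    intro p
    simp only [hAinv_def, ContinuousLinearMap.prod_apply, ContinuousLinearMap.smul_apply,
      ContinuousLinearMap.sub_apply, ContinuousLinearMap.coe_fst', ContinuousLinearMap.coe_snd',
      smul_eq_mul]
  have hleft : Function.LeftInverse Ainv A := by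
    intro p
    obtain ⟨x, y⟩ := p
    rw [hAapp', hAinvapp]
    simp only [Prod.mk.injEq, true_and]
    field_simp
    ring
  have hright : Function.RightInverse Ainv A := by
    intro p
    obtain ⟨x, y⟩ := p
    rw [hAinvapp, hAapp']
    simp only [Prod.mk.injEq, true_and]
    field_simp
    ring
  set Ae : (ℝ × ℝ) ≃L[ℝ] (ℝ × ℝ) := ContinuousLinearEquiv.equivOfInverse A Ainv hleft hright
    with hAe_def
  have hAe_coe : (Ae : (ℝ × ℝ) →L[ℝ] (ℝ × ℝ)) = A := by
    ext p <;> rfl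
  have hFd' : HasStrictFDerivAt F (Ae : (ℝ × ℝ) →L[ℝ] (ℝ × ℝ)) (y₀, τ) := by
    rw [hAe_coe]; exact hFd
  set g : ℝ × ℝ → ℝ × ℝ := hFd'.localInverse F Ae (y₀, τ) with hg_def
  have hFpt : F (y₀, τ) = (y₀, α) := by
    rw [hF_def]
    simp only [Prod.mk.injEq, true_and]
    exact heq y₀ hy₀
  have hgd : HasStrictFDerivAt g ((Ae.symm : (ℝ × ℝ) →L[ℝ] (ℝ × ℝ))) (y₀, α) := by
    rw [← hFpt]; exact hFd'.to_localInverse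
  -- eventually t y = (g (y, α)).2
  have hev : (fun y => (g (y, α)).2) =ᶠ[nhds y₀] t := by
    have h1 : ∀ᶠ q in nhds (y₀, α), F (g q) = q := by
      rw [← hFpt]; exact hFd'.eventually_right_inverse
    have hc : Filter.Tendsto (fun y : ℝ => (y, α)) (nhds y₀) (nhds (y₀, α)) :=
      (continuous_id.prodMk continuous_const).continuousAt
    have h2 : ∀ᶠ y in nhds y₀, F (g (y, α)) = (y, α) := hc.eventually h1
    have h3 : ∀ᶠ y in nhds y₀, 0 < y := eventually_gt_nhds hy₀
    filter_upwards [h2, h3] with y hFy hy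
    have h4 : (g (y, α)).1 = y := congrArg Prod.fst hFy
    have h5 : Ψ (g (y, α)) = α := congrArg Prod.snd hFy
    rw [hΨ_def] at h5
    simp only [h4] at h5
    have h6 := heq y hy
    have hm := strictMono_psi (y / k)
    exact hm.injective (by rw [h5, h6])
  -- derivative of t at y₀
  set tv : ℝ := D⁻¹ * (0 - aC * 1) with htv_def
  have ht' : HasDerivAt t tv y₀ := by
    have hcurve : HasDerivAt (fun y : ℝ => (y, α)) ((1:ℝ), (0:ℝ)) y₀ :=
      (hasDerivAt_id y₀).prodMk (hasDerivAt_const y₀ α)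
    have hcomp : HasDerivAt (fun y => g (y, α)) (Ae.symm (1, 0)) y₀ :=
      by have := hgd.hasFDerivAt.comp_hasDerivAt y₀ hcurve; exact this
    have hsnd : HasDerivAt (fun y => (g (y, α)).2) ((Ae.symm (1, 0)).2) y₀ :=
      (ContinuousLinearMap.snd ℝ ℝ ℝ).hasFDerivAt.comp_hasDerivAt y₀ hcomp
    have hval : (Ae.symm (1, 0) : ℝ × ℝ).2 = tv := by
      rw [hAe_def, ContinuousLinearEquiv.symm_equivOfInverse]
      rw [show ((ContinuousLinearEquiv.equivOfInverse Ainv A hright hleft) ((1:ℝ), (0:ℝ)))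
          = Ainv (1, 0) from rfl, hAinvapp]
    rw [hval] at hsnd
    exact hsnd.congr_of_eventuallyEq hev.symm
  -- final chain rule
  set ap : ℝ := σ * y₀ / k + τ / σ with hap_def
  set am : ℝ := σ * y₀ / k - τ / σ with ham_def
  have hφam : phiD am = phiD ap * E := by
    rw [phiD_ratio ap am, hE_def]
    congr 1
    rw [hap_def, ham_def, hz_def]
    field_simp
    have h1 := hσ0.ne'
    have h2 := hk.ne'
    congr 1
    field_simp
    ring
  have hinp : HasDerivAt (fun y => σ * y / k + t y / σ) (σ / k + tv / σ) y₀ := by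
    have h1 : HasDerivAt (fun y : ℝ => σ * y / k) (σ / k) y₀ := by
      simpa using ((hasDerivAt_id y₀).const_mul σ).div_const k
    exact h1.add (ht'.div_const σ)
  have hinm : HasDerivAt (fun y => σ * y / k - t y / σ) (σ / k - tv / σ) y₀ := by
    have h1 : HasDerivAt (fun y : ℝ => σ * y / k) (σ / k) y₀ := by
      simpa using ((hasDerivAt_id y₀).const_mul σ).div_const k
    exact h1.sub (ht'.div_const σ)
  have hSp : HasDerivAt (fun y => stdPhi (σ * y / k + t y / σ))
      (phiD ap * (σ / k + tv / σ)) y₀ :=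
    by have := (hasStrictDerivAt_stdPhi ap).hasDerivAt.comp y₀ hinp; exact this
  have hSm : HasDerivAt (fun y => stdPhi (σ * y / k - t y / σ))
      (phiD am * (σ / k - tv / σ)) y₀ :=
    by have := (hasStrictDerivAt_stdPhi am).hasDerivAt.comp y₀ hinm; exact this
  have hS := hSp.sub hSm
  refine ⟨phiD ap * (σ / k + tv / σ) - phiD am * (σ / k - tv / σ), ?_, hS⟩
  -- positivity
  have hP : 0 < phiD u := phiD_pos u
  have hQ : 0 < phiD ap := phiD_pos ap
  have hkne : k ≠ 0 := hk.ne'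
  have hσne : σ ≠ 0 := hσ0.ne'
  have hEne : (1:ℝ) + E ≠ 0 := by intro hcon; linarith
  have htv : tv = (E - 1) / (k * (1 + E)) := by
    rw [htv_def, haC_def, hD_def, hφv]
    field_simp
    ring
  have hval : phiD ap * (σ / k + tv / σ) - phiD am * (σ / k - tv / σ)
      = phiD ap * (E - 1) / σ := by
    rw [hφam, htv, hk_def]
    have h1 : (1:ℝ) - σ ^ 2 ≠ 0 := by rw [← hk_def]; exact hkne
    field_simp
    ring
  rw [hval]
  have : 0 < E - 1 := by linarith
  positivity

theorem stmt_3 (σ α : ℝ) (hσ0 : 0 < σ) (hσ1 : σ < 1) (hα : α ∈ Set.Ioo (0:ℝ) 1)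
    (t : ℝ → ℝ) (ht : ∀ y > 0, 0 < t y)
    (heq : ∀ y > 0,
      stdPhi (y / (1 - σ ^ 2) + t y) - stdPhi (y / (1 - σ ^ 2) - t y) = α) :
    StrictAntiOn
      (fun y => 1 - (stdPhi (σ * y / (1 - σ ^ 2) + t y / σ)
                      - stdPhi (σ * y / (1 - σ ^ 2) - t y / σ)))
      (Set.Ioi 0) ∧
    ∀ y > 0,
      deriv (fun y => 1 - (stdPhi (σ * y / (1 - σ ^ 2) + t y / σ)
                      - stdPhi (σ * y / (1 - σ ^ 2) - t y / σ))) y < 0 := by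
  set β : ℝ → ℝ := fun y => 1 - (stdPhi (σ * y / (1 - σ ^ 2) + t y / σ)
                      - stdPhi (σ * y / (1 - σ ^ 2) - t y / σ)) with hβ_def
  have key : ∀ y > 0, ∃ d > 0, HasDerivAt β (-d) y := by
    intro y hy
    obtain ⟨d, hd, hS⟩ := main_deriv σ α hσ0 hσ1 t ht heq y hy
    exact ⟨d, hd, hS.const_sub 1⟩
  have hderiv : ∀ y > 0, deriv β y < 0 := by
    intro y hy
    obtain ⟨d, hd, h⟩ := key y hy
    rw [h.deriv]
    linarith
  refine ⟨?_, hderiv⟩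
  have hcont : ContinuousOn β (Set.Ioi 0) := by
    intro y hy
    obtain ⟨d, _, h⟩ := key y (Set.mem_Ioi.mp hy)
    exact h.differentiableAt.continuousAt.continuousWithinAt
  refine strictAntiOn_of_deriv_neg (convex_Ioi 0) hcont ?_
  intro y hy
  rw [interior_Ioi] at hy
  exact hderiv y (Set.mem_Ioi.mp hy)
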